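/- arXiv:2109.15148 — 2 statements merged into one kernel-verified Lean document; each statement's English description precedes it below -/
import Mathlib

section
/- Let d, a, x, w, y, b ∈ V be pairwise distinct vertices such that da, ax, xw, wy, yb, bd are all edges of G_p (so they form a 6-cycle). Then d₁²·a₁ + d₁²·w₁ − d₁·a₁·x₁ − d₁·a₁·y₁ + d₁·x₁·w₁ + d₁·w₁·y₁ − a₁·x₁² − a₁·x₁·y₁ − a₁·y₁² + x₁²·w₁ + x₁·w₁·y₁ − w₁·y₁² = 0 in F_p. -/
/-- The set `S ⊆ F_p` of elements whose least nonnegative representative `k`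
satisfies `1 ≤ k ≤ (p-5)/6` and `k ≡ 1 (mod 3)`. -/
def Svertex (p : ℕ) : Set (ZMod p) :=
  {x | 1 ≤ x.val ∧ x.val ≤ (p - 5) / 6 ∧ x.val % 3 = 1}

/-- The vertex set `V = S × F_p × F_p` of the graph `G_p`. -/
def Vsub (p : ℕ) : Type :=
  {v : ZMod p × ZMod p × ZMod p // v.1 ∈ Svertex p}

/-- The graph `G_p` on `V = S × F_p × F_p`: distinct vertices `x, y` are adjacent iff
`x₂ + y₃ = x₁·y₁²` and `x₃ + y₂ = x₁²·y₁`. -/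
def Gp (p : ℕ) : SimpleGraph (Vsub p) where
  Adj x y := x ≠ y ∧ x.val.2.1 + y.val.2.2 = x.val.1 * y.val.1 ^ 2 ∧
    x.val.2.2 + y.val.2.1 = x.val.1 ^ 2 * y.val.1
  symm := by
    constructor
    rintro x y ⟨hne, h1, h2⟩
    exact ⟨hne.symm, by linear_combination h2, by linear_combination h1⟩
  loopless := ⟨fun x h => h.1 rfl⟩

theorem stmt_4 (p : ℕ) (hp : p.Prime) (h5 : p % 6 = 5) (h11 : 11 < p)
    (d a x w y b : Vsub p)
    (hdist : [d, a, x, w, y, b].Pairwise (· ≠ ·))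
    (hda : (Gp p).Adj d a) (hax : (Gp p).Adj a x) (hxw : (Gp p).Adj x w)
    (hwy : (Gp p).Adj w y) (hyb : (Gp p).Adj y b) (hbd : (Gp p).Adj b d) :
    d.val.1 ^ 2 * a.val.1 + d.val.1 ^ 2 * w.val.1 - d.val.1 * a.val.1 * x.val.1
      - d.val.1 * a.val.1 * y.val.1 + d.val.1 * x.val.1 * w.val.1
      + d.val.1 * w.val.1 * y.val.1 - a.val.1 * x.val.1 ^ 2
      - a.val.1 * x.val.1 * y.val.1 - a.val.1 * y.val.1 ^ 2
      + x.val.1 ^ 2 * w.val.1 + x.val.1 * w.val.1 * y.val.1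
      - w.val.1 * y.val.1 ^ 2 = 0 := by

  haveI : Fact p.Prime := ⟨hp⟩
  obtain ⟨hne_da, eda1, eda2⟩ := hda
  obtain ⟨hne_ax, eax1, eax2⟩ := hax
  obtain ⟨hne_xw, exw1, exw2⟩ := hxw
  obtain ⟨hne_wy, ewy1, ewy2⟩ := hwy
  obtain ⟨hne_yb, eyb1, eyb2⟩ := hyb
  obtain ⟨hne_bd, ebd1, ebd2⟩ := hbd
  simp only [List.pairwise_cons, List.mem_cons, List.mem_singleton,
    List.not_mem_nil, or_false, ne_eq] at hdist
  set D := d.val.1; set A := a.val.1; set X := x.val.1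
  set W := w.val.1; set Y := y.val.1; set B := b.val.1
  have hR1 : D * A ^ 2 - A ^ 2 * X + X * W ^ 2 - W ^ 2 * Y + Y * B ^ 2 - B ^ 2 * D = 0 := by
    linear_combination eax2 - eda1 + ewy2 - exw1 + ebd2 - eyb1
  have hR2 : D ^ 2 * A - A * X ^ 2 + X ^ 2 * W - W * Y ^ 2 + Y ^ 2 * B - B * D ^ 2 = 0 := by
    linear_combination eax1 - eda2 + ewy1 - exw2 + ebd1 - eyb2
  have hdx : D ≠ X := by
    intro h
    refine hdist.1 x (Or.inr (Or.inl rfl)) (Subtype.ext (Prod.ext h (Prod.ext ?_ ?_)))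
    · linear_combination eda1 - eax2 + A ^ 2 * h
    · linear_combination eda2 - eax1 + A * (D + X) * h
  have haw : A ≠ W := by
    intro h
    refine hdist.2.1 w (Or.inr (Or.inl rfl)) (Subtype.ext (Prod.ext h (Prod.ext ?_ ?_)))
    · linear_combination eax1 - exw2 + X ^ 2 * h
    · linear_combination eax2 - exw1 + X * (A + W) * h
  have hxy : X ≠ Y := by
    intro h
    refine hdist.2.2.1 y (Or.inr (Or.inl rfl)) (Subtype.ext (Prod.ext h (Prod.ext ?_ ?_)))
    · linear_combination exw1 - ewy2 + W ^ 2 * h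
    · linear_combination exw2 - ewy1 + W * (X + Y) * h
  have hKey : (D ^ 2 * A + D ^ 2 * W - D * A * X - D * A * Y + D * X * W + D * W * Y
      - A * X ^ 2 - A * X * Y - A * Y ^ 2 + X ^ 2 * W + X * W * Y - W * Y ^ 2)
      * ((D - X) * ((A - W) * (X - Y))) = 0 := by
    linear_combination (D ^ 2 * A - A * X ^ 2 + X ^ 2 * W - W * Y ^ 2
        - B * (Y ^ 2 - D ^ 2)) * hR2 - ((D - Y) * (D + Y) ^ 2) * hR1
  have hne : (D - X) * ((A - W) * (X - Y)) ≠ 0 :=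
    mul_ne_zero (sub_ne_zero.mpr hdx)
      (mul_ne_zero (sub_ne_zero.mpr haw) (sub_ne_zero.mpr hxy))
  exact (mul_eq_zero.mp hKey).resolve_right hne
end

section
/- Let d, a, b, c, x, y, z, w ∈ V be pairwise distinct vertices such that da, db, dc, ax, by, cz, wx, wy, wz are all edges of G_p (so they form a copy of the theta graph θ_{3,3} with the three paths d–a–x–w, d–b–y–w, d–c–z–w). Then a₁·y₁ − a₁·z₁ − b₁·x₁ + b₁·z₁ + c₁·x₁ − c₁·y₁ = 0 in F_p. -/
/-- The sum of two elements of `S` is nonzero, since their representatives are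
small and positive. -/
lemma Svertex_add_ne_zero {p : ℕ} (hp : p.Prime) (h11 : 11 < p)
    {α β : ZMod p} (hα : α ∈ Svertex p) (hβ : β ∈ Svertex p) : α + β ≠ 0 := by
  haveI : NeZero p := ⟨hp.pos.ne'⟩
  intro h
  obtain ⟨hα1, hα2, -⟩ := hα
  obtain ⟨hβ1, hβ2, -⟩ := hβ
  have hc : ((α.val + β.val : ℕ) : ZMod p) = 0 := by
    push_cast
    rw [ZMod.natCast_rightInverse α, ZMod.natCast_rightInverse β]
    exact h
  have hdvd : p ∣ α.val + β.val := (ZMod.natCast_eq_zero_iff _ _).mp hc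
  have hle : p ≤ α.val + β.val := Nat.le_of_dvd (by omega) hdvd
  omega

/-- Two neighbours of a common vertex with the same first coordinate are equal. -/
lemma eq_of_adj_fst {p : ℕ} {n u v : Vsub p}
    (h1 : (Gp p).Adj n u) (h2 : (Gp p).Adj n v)
    (h : u.val.1 = v.val.1) : u = v := by
  obtain ⟨-, e1, e2⟩ := h1
  obtain ⟨-, f1, f2⟩ := h2
  have h21 : u.val.2.1 = v.val.2.1 := by
    linear_combination e2 - f2 + n.val.1 ^ 2 * h
  have h22 : u.val.2.2 = v.val.2.2 := by
    linear_combination e1 - f1 + n.val.1 * (u.val.1 + v.val.1) * h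
  exact Subtype.ext (Prod.ext h (Prod.ext h21 h22))

theorem stmt_5 (p : ℕ) (hp : p.Prime) (h5 : p % 6 = 5) (h11 : 11 < p)
    (d a b c x y z w : Vsub p)
    (hdist : [d, a, b, c, x, y, z, w].Pairwise (· ≠ ·))
    (hda : (Gp p).Adj d a) (hdb : (Gp p).Adj d b) (hdc : (Gp p).Adj d c)
    (hax : (Gp p).Adj a x) (hby : (Gp p).Adj b y) (hcz : (Gp p).Adj c z)
    (hwx : (Gp p).Adj w x) (hwy : (Gp p).Adj w y) (hwz : (Gp p).Adj w z) :
    a.val.1 * y.val.1 - a.val.1 * z.val.1 - b.val.1 * x.val.1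
      + b.val.1 * z.val.1 + c.val.1 * x.val.1 - c.val.1 * y.val.1 = 0 := by
  haveI : Fact p.Prime := ⟨hp⟩
  -- notation
  set D := d.val.1 with hD
  set W := w.val.1 with hW
  set T1 := a.val.1 with hT1
  set T2 := b.val.1 with hT2
  set T3 := c.val.1 with hT3
  set S1 := x.val.1 with hS1
  set S2 := y.val.1 with hS2
  set S3 := z.val.1 with hS3
  -- distinctness of the relevant vertices
  simp only [List.pairwise_cons, List.mem_cons, List.not_mem_nil, List.mem_singleton,
    forall_eq_or_imp, forall_eq, and_true] at hdist
  have hab : a ≠ b := by tauto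
  have hac : a ≠ c := by tauto
  have hbc : b ≠ c := by tauto
  have hxy : x ≠ y := by tauto
  have hxz : x ≠ z := by tauto
  have hyz : y ≠ z := by tauto
  -- nonvanishing sums
  have hT1W : T1 + W ≠ 0 := by
    rw [add_comm]; exact Svertex_add_ne_zero hp h11 w.property a.property
  have hT2W : T2 + W ≠ 0 := by
    rw [add_comm]; exact Svertex_add_ne_zero hp h11 w.property b.property
  have hT3W : T3 + W ≠ 0 := by
    rw [add_comm]; exact Svertex_add_ne_zero hp h11 w.property c.property
  -- the two path invariants, pairwise
  have hA12 : (D ^ 2 - S1 ^ 2) * (T1 - W) = (D ^ 2 - S2 ^ 2) * (T2 - W) := by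
    linear_combination -hda.2.2 + hax.2.1 - hwx.2.1 + hdb.2.2 - hby.2.1 + hwy.2.1
  have hA13 : (D ^ 2 - S1 ^ 2) * (T1 - W) = (D ^ 2 - S3 ^ 2) * (T3 - W) := by
    linear_combination -hda.2.2 + hax.2.1 - hwx.2.1 + hdc.2.2 - hcz.2.1 + hwz.2.1
  have hA23 : (D ^ 2 - S2 ^ 2) * (T2 - W) = (D ^ 2 - S3 ^ 2) * (T3 - W) := by
    linear_combination -hdb.2.2 + hby.2.1 - hwy.2.1 + hdc.2.2 - hcz.2.1 + hwz.2.1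
  have hB12 : (D - S1) * (T1 ^ 2 - W ^ 2) = (D - S2) * (T2 ^ 2 - W ^ 2) := by
    linear_combination -hda.2.1 + hax.2.2 - hwx.2.2 + hdb.2.1 - hby.2.2 + hwy.2.2
  have hB13 : (D - S1) * (T1 ^ 2 - W ^ 2) = (D - S3) * (T3 ^ 2 - W ^ 2) := by
    linear_combination -hda.2.1 + hax.2.2 - hwx.2.2 + hdc.2.1 - hcz.2.2 + hwz.2.2
  have hB23 : (D - S2) * (T2 ^ 2 - W ^ 2) = (D - S3) * (T3 ^ 2 - W ^ 2) := by
    linear_combination -hdb.2.1 + hby.2.2 - hwy.2.2 + hdc.2.1 - hcz.2.2 + hwz.2.2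
  by_cases hP1 : (D - S1) * (T1 - W) = 0
  · -- degenerate case: then all three products vanish, contradiction by pigeonhole
    have hP2 : (D - S2) * (T2 - W) = 0 := by
      have h0 : (D - S2) * (T2 - W) * (T2 + W) = 0 := by
        linear_combination -hB12 + (T1 + W) * hP1
      exact (mul_eq_zero.mp h0).resolve_right hT2W
    have hP3 : (D - S3) * (T3 - W) = 0 := by
      have h0 : (D - S3) * (T3 - W) * (T3 + W) = 0 := by
        linear_combination -hB13 + (T1 + W) * hP1
      exact (mul_eq_zero.mp h0).resolve_right hT3W
    exfalso
    rcases mul_eq_zero.mp hP1 with h1 | h1 <;>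
    rcases mul_eq_zero.mp hP2 with h2 | h2 <;>
    rcases mul_eq_zero.mp hP3 with h3 | h3
    · exact hxy (eq_of_adj_fst hwx hwy (by linear_combination h2 - h1 - hS1 + hS2))
    · exact hxy (eq_of_adj_fst hwx hwy (by linear_combination h2 - h1 - hS1 + hS2))
    · exact hxz (eq_of_adj_fst hwx hwz (by linear_combination h3 - h1 - hS1 + hS3))
    · exact hbc (eq_of_adj_fst hdb hdc (by linear_combination h2 - h3 - hT2 + hT3))
    · exact hyz (eq_of_adj_fst hwy hwz (by linear_combination h3 - h2 - hS2 + hS3))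
    · exact hac (eq_of_adj_fst hda hdc (by linear_combination h1 - h3 - hT1 + hT3))
    · exact hab (eq_of_adj_fst hda hdb (by linear_combination h1 - h2 - hT1 + hT2))
    · exact hab (eq_of_adj_fst hda hdb (by linear_combination h1 - h2 - hT1 + hT2))
  · -- main case: all three products are nonzero
    have hP2 : (D - S2) * (T2 - W) ≠ 0 := by
      intro h
      apply hP1
      have h0 : (D - S1) * (T1 - W) * (T1 + W) = 0 := by
        linear_combination hB12 + (T2 + W) * h
      exact (mul_eq_zero.mp h0).resolve_right hT1W
    have hP3 : (D - S3) * (T3 - W) ≠ 0 := by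
      intro h
      apply hP1
      have h0 : (D - S1) * (T1 - W) * (T1 + W) = 0 := by
        linear_combination hB13 + (T3 + W) * h
      exact (mul_eq_zero.mp h0).resolve_right hT1W
    have key12 : ((D - S1) * (T1 - W)) * ((D - S2) * (T2 - W)) *
        ((D + S1) * (T2 + W) - (D + S2) * (T1 + W)) = 0 := by
      linear_combination ((D - S2) * (T2 - W) * (T2 + W)) * hA12
        - ((D - S2) * (T2 - W) * (D + S2)) * hB12
    have key13 : ((D - S1) * (T1 - W)) * ((D - S3) * (T3 - W)) *
        ((D + S1) * (T3 + W) - (D + S3) * (T1 + W)) = 0 := by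
      linear_combination ((D - S3) * (T3 - W) * (T3 + W)) * hA13
        - ((D - S3) * (T3 - W) * (D + S3)) * hB13
    have key23 : ((D - S2) * (T2 - W)) * ((D - S3) * (T3 - W)) *
        ((D + S2) * (T3 + W) - (D + S3) * (T2 + W)) = 0 := by
      linear_combination ((D - S3) * (T3 - W) * (T3 + W)) * hA23
        - ((D - S3) * (T3 - W) * (D + S3)) * hB23
    have hΨ12 : (D + S1) * (T2 + W) - (D + S2) * (T1 + W) = 0 :=
      (mul_eq_zero.mp key12).resolve_left (mul_ne_zero hP1 hP2)
    have hΨ13 : (D + S1) * (T3 + W) - (D + S3) * (T1 + W) = 0 :=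
      (mul_eq_zero.mp key13).resolve_left (mul_ne_zero hP1 hP3)
    have hΨ23 : (D + S2) * (T3 + W) - (D + S3) * (T2 + W) = 0 :=
      (mul_eq_zero.mp key23).resolve_left (mul_ne_zero hP2 hP3)
    linear_combination -hΨ12 - hΨ23 + hΨ13
end
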